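/- The generalized twisted cube C is a bounded subset of ℝ^N; in particular, C contains only finitely many lattice points of ℤ^N. -/

import Mathlib

/-!
Generalized Bott manifold data: `m ≥ 1`, block sizes `n : Fin m → ℕ` (each ≥ 1),
integers `ℓ : Fin m → ℤ` and `c i j k` (used only for `i < j`).
The lattice `ℤ^{N+1}` is realized as functions `((Σ i, Fin (n i)) ⊕ Unit) → ℤ`,
with standard basis `E p`; `E (Sum.inr ())` is `e_{m+1}`.
-/

noncomputable section

namespace GB

variable (m : ℕ) (n : Fin m → ℕ)

/-- The double-index set for the coordinates `x_{i,k}`, `1 ≤ i ≤ m`, `1 ≤ k ≤ n_i`. -/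
abbrev J : Type := Σ i : Fin m, Fin (n i)

/-- The lattice `ℤ^{N+1}`. -/
abbrev L : Type := (J m n ⊕ Unit) → ℤ

/-- Standard basis vector of `ℤ^{N+1}`. -/
def E (p : J m n ⊕ Unit) : L m n := fun q => if q = p then 1 else 0

/-- The basis element `λ^μ` of the group ring `ℤ[ℤ^{N+1}]`. -/
def lam (μ : L m n) : AddMonoidAlgebra ℤ (L m n) := AddMonoidAlgebra.single μ 1

/-- `⟨x, e_i⟩ = Σ_k x_k e_{i,k}`. -/
def emb (i : Fin m) (z : Fin (n i) → ℤ) : L m n :=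
  ∑ k : Fin (n i), z k • E m n (Sum.inl ⟨i, k⟩)

variable (ℓ : Fin m → ℤ) (c : (i j : Fin m) → Fin (n j) → ℤ)

/-- `k_i(μ) = ℓ_i + Σ_{j=i+1}^m Σ_{k=1}^{n_j} c_{i,j}^{(k)} μ_{j,k}`. -/
def kfun (i : Fin m) (μ : L m n) : ℤ :=
  ℓ i + ∑ j : Fin m, ∑ k : Fin (n j), if i < j then c i j k * μ (Sum.inl ⟨j, k⟩) else 0

/-- `Δ⁻_{n,r} = {z ∈ ℤ_{≤0}^n : z_1 + ⋯ + z_n = -r}`. -/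
def DeltaMinus (nn : ℕ) (r : ℤ) : Set (Fin nn → ℤ) :=
  {z | (∀ j, z j ≤ 0) ∧ ∑ j, z j = -r}

/-- `Δ⁺_{n,r} = {z ∈ ℤ_{>0}^n : z_1 + ⋯ + z_n = r - 1}`. -/
def DeltaPlus (nn : ℕ) (r : ℤ) : Set (Fin nn → ℤ) :=
  {z | (∀ j, 0 < z j) ∧ ∑ j, z j = r - 1}

/-- The value of the operator `D_i` on the basis element `λ^μ`. -/
def Dsingle (i : Fin m) (μ : L m n) : AddMonoidAlgebra ℤ (L m n) :=
  if 0 ≤ kfun m n ℓ c i μ then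
    ∑ r ∈ Finset.Icc (0 : ℤ) (kfun m n ℓ c i μ),
      ∑ᶠ z ∈ DeltaMinus (n i) r, lam m n (μ + emb m n i z)
  else if -(n i : ℤ) ≤ kfun m n ℓ c i μ then 0
  else
    ∑ r ∈ Finset.Icc ((n i : ℤ) + 1) (-(kfun m n ℓ c i μ)),
      ∑ᶠ z ∈ DeltaPlus (n i) r, ((-1) ^ (n i) : ℤ) • lam m n (μ + emb m n i z)

/-- The ℤ-linear operator `D_i` on `ℤ[ℤ^{N+1}]`, extending `λ^μ ↦ Dsingle i μ`. -/
def Dop (i : Fin m) (f : AddMonoidAlgebra ℤ (L m n)) : AddMonoidAlgebra ℤ (L m n) :=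
  Finsupp.sum f.coeff fun μ a => a • Dsingle m n ℓ c i μ

/-- `A_i(x)`; for `i = m` the inner sum is empty, so `A_m(x) = -ℓ_m`. -/
def A (x : J m n → ℝ) (i : Fin m) : ℝ :=
  -(ℓ i + ∑ j : Fin m, ∑ k : Fin (n j), if i < j then (c i j k : ℝ) * x ⟨j, k⟩ else 0)

/-- The generalized twisted cube `C ⊆ ℝ^N`. -/
def C : Set (J m n → ℝ) :=
  {x | ∀ i : Fin m,
    (A m n ℓ c x i ≤ ∑ k, x ⟨i, k⟩ ∧ (∑ k, x ⟨i, k⟩) ≤ 0 ∧ ∀ k, x ⟨i, k⟩ ≤ 0) ∨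
    (0 < ∑ k, x ⟨i, k⟩ ∧ (∑ k, x ⟨i, k⟩) < A m n ℓ c x i ∧ ∀ k, 0 < x ⟨i, k⟩)}

/-- `sgn(t) = 1` if `t > 0`, `-1` if `t ≤ 0` (real argument). -/
def sgnR (t : ℝ) : ℤ := if 0 < t then 1 else -1

/-- `sgn(t) = 1` if `t > 0`, `-1` if `t ≤ 0` (integer argument). -/
def sgnZ (t : ℤ) : ℤ := if 0 < t then 1 else -1

open Classical in
/-- The density function `ρ` of the generalized twisted cube. -/
def rho (x : J m n → ℝ) : ℤ :=
  if x ∈ C m n ℓ c then (-1) ^ (∑ i, n i) * ∏ p : J m n, sgnR (x p) else 0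

end GB

end

lemma gb_key (m : ℕ) (n : Fin m → ℕ) (ℓ : Fin m → ℤ)
    (c : (i j : Fin m) → Fin (n j) → ℤ) (x : GB.J m n → ℝ)
    (hx : x ∈ GB.C m n ℓ c) (i : Fin m) (k : Fin (n i)) :
    |x ⟨i, k⟩| ≤ |(ℓ i : ℝ)| +
      ∑ j : Fin m, ∑ k' : Fin (n j),
        (if i < j then |(c i j k' : ℝ)| * |x ⟨j, k'⟩| else 0) := by
  have hA : |x ⟨i, k⟩| ≤ |GB.A m n ℓ c x i| := by
    rcases hx i with ⟨h1, h2, h3⟩ | ⟨h1, h2, h3⟩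
    · have hS : (∑ k', x ⟨i, k'⟩) ≤ x ⟨i, k⟩ := by
        have h := Finset.single_le_sum (f := fun k' => -x ⟨i, k'⟩)
          (fun k' _ => by simpa using h3 k') (Finset.mem_univ k)
        have h' : (∑ k' : Fin (n i), -x ⟨i, k'⟩) = -∑ k' : Fin (n i), x ⟨i, k'⟩ := by
          simp
        rw [h'] at h
        linarith
      have hk := h3 k
      rw [abs_of_nonpos hk, abs_of_nonpos (by linarith)]
      linarith
    · have hS : x ⟨i, k⟩ ≤ ∑ k', x ⟨i, k'⟩ :=
        Finset.single_le_sum (fun k' _ => (h3 k').le) (Finset.mem_univ k)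
      have hk := h3 k
      rw [abs_of_pos hk, abs_of_pos (by linarith)]
      linarith
  refine hA.trans ?_
  rw [GB.A, abs_neg]
  refine (abs_add_le _ _).trans (add_le_add le_rfl ?_)
  refine (Finset.abs_sum_le_sum_abs _ _).trans ?_
  refine Finset.sum_le_sum fun j _ => ?_
  refine (Finset.abs_sum_le_sum_abs _ _).trans ?_
  refine Finset.sum_le_sum fun k' _ => ?_
  split <;> simp [abs_mul]

lemma gb_exists_bound (m : ℕ) (n : Fin m → ℕ) (ℓ : Fin m → ℤ)
    (c : (i j : Fin m) → Fin (n j) → ℤ) :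
    ∃ B : Fin m → ℝ, (∀ i, 0 ≤ B i) ∧
      ∀ x ∈ GB.C m n ℓ c, ∀ i k, |x ⟨i, k⟩| ≤ B i := by
  classical
  have claim : ∀ t : ℕ, ∀ i : Fin m, m - 1 - i.val ≤ t →
      ∃ Bi : ℝ, 0 ≤ Bi ∧ ∀ x ∈ GB.C m n ℓ c, ∀ k, |x ⟨i, k⟩| ≤ Bi := by
    intro t
    induction t using Nat.strong_induction_on with
    | _ t IH =>
      intro i hi
      have hprev : ∀ j : Fin m, i < j →
          ∃ Bj : ℝ, 0 ≤ Bj ∧ ∀ x ∈ GB.C m n ℓ c, ∀ k, |x ⟨j, k⟩| ≤ Bj := by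
        intro j hij
        have hjlt : m - 1 - j.val < t := by
          have h1 : i.val < j.val := hij
          have h2 : j.val < m := j.isLt
          omega
        exact IH _ hjlt j le_rfl
      set B : Fin m → ℝ := fun j => if h : i < j then (hprev j h).choose else 0 with hB
      have hBnn : ∀ j, 0 ≤ B j := by
        intro j; rw [hB]; dsimp only; split
        · exact (hprev j ‹_›).choose_spec.1
        · exact le_rfl
      refine ⟨|(ℓ i : ℝ)| + ∑ j : Fin m, ∑ k : Fin (n j),
        (if i < j then |(c i j k : ℝ)| * B j else 0), ?_, ?_⟩
      · refine add_nonneg (abs_nonneg _) ?_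
        refine Finset.sum_nonneg fun j _ => Finset.sum_nonneg fun k _ => ?_
        split
        · exact mul_nonneg (abs_nonneg _) (hBnn j)
        · exact le_rfl
      · intro x hx k
        refine (gb_key m n ℓ c x hx i k).trans (add_le_add le_rfl ?_)
        refine Finset.sum_le_sum fun j _ => Finset.sum_le_sum fun k' _ => ?_
        split
        · rename_i h
          have hxb : |x ⟨j, k'⟩| ≤ B j := by
            rw [hB]; dsimp only; rw [dif_pos h]
            exact (hprev j h).choose_spec.2 x hx k'
          exact mul_le_mul_of_nonneg_left hxb (abs_nonneg _)
        · exact le_rfl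
  have claim' : ∀ i : Fin m, ∃ Bi : ℝ, 0 ≤ Bi ∧
      ∀ x ∈ GB.C m n ℓ c, ∀ k, |x ⟨i, k⟩| ≤ Bi := fun i => claim m i (by omega)
  choose B hB1 hB2 using claim'
  exact ⟨B, hB1, fun x hx i k => hB2 i x hx k⟩

/-- The generalized twisted cube `C ⊆ ℝ^N` is bounded; in particular
it contains only finitely many lattice points of `ℤ^N`. -/
theorem gbott_cube_bounded
    (m : ℕ) (hm : 1 ≤ m) (n : Fin m → ℕ) (hn : ∀ i, 1 ≤ n i)
    (ℓ : Fin m → ℤ) (c : (i j : Fin m) → Fin (n j) → ℤ) :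
    Bornology.IsBounded (GB.C m n ℓ c) ∧
    {x : GB.J m n → ℤ | (fun p => (x p : ℝ)) ∈ GB.C m n ℓ c}.Finite := by
  obtain ⟨B, hBnn, hB⟩ := gb_exists_bound m n ℓ c
  set R : ℝ := ∑ i : Fin m, B i with hR
  have hRnn : 0 ≤ R := Finset.sum_nonneg fun i _ => hBnn i
  have hBR : ∀ i : Fin m, B i ≤ R :=
    fun i => Finset.single_le_sum (fun j _ => hBnn j) (Finset.mem_univ i)
  have hnorm : ∀ x ∈ GB.C m n ℓ c, ∀ p : GB.J m n, |x p| ≤ R := by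
    intro x hx p
    obtain ⟨i, k⟩ := p
    exact (hB x hx i k).trans (hBR i)
  constructor
  · rw [isBounded_iff_forall_norm_le]
    refine ⟨R, fun x hx => ?_⟩
    rw [pi_norm_le_iff_of_nonneg hRnn]
    intro p
    rw [Real.norm_eq_abs]
    exact hnorm x hx p
  · have hsub : {x : GB.J m n → ℤ | (fun p => (x p : ℝ)) ∈ GB.C m n ℓ c} ⊆
        Set.pi Set.univ (fun _ : GB.J m n => Set.Icc (-⌈R⌉) ⌈R⌉) := by
      intro x hx p _
      have h := hnorm _ hx p
      have h2 : (|x p| : ℝ) ≤ (⌈R⌉ : ℝ) := by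
        push_cast
        exact h.trans (Int.le_ceil R)
      have h3 : |x p| ≤ ⌈R⌉ := by exact_mod_cast h2
      exact abs_le.mp h3
    exact Set.Finite.subset (Set.Finite.pi fun _ => Set.finite_Icc _ _) hsub
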